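/- Let f_n(t,u_{n-1},u_n,u_{n+1}), τ_n(t,u_n), φ_n(t,u_n) (n ∈ ℤ) be continuously differentiable real functions satisfying the determining equation for Lie point symmetries of the Volterra-type equation identically. If either ∂f_n/∂u_{n+1} is nowhere zero for every n ∈ ℤ, or ∂f_n/∂u_{n-1} is nowhere zero for every n ∈ ℤ, then τ_n(t,u_n) depends on t alone and is independent of n: there exists a single function τ(t) such that τ_n(t,u) = τ(t) for all n ∈ ℤ, t ∈ ℝ, u ∈ ℝ. -/

import Mathlib

/-- The determining equation for Lie point symmetries of the Volterra-type
differential–difference equation `u̇ₙ = fₙ(t, uₙ₋₁, uₙ, uₙ₊₁)`, with point-symmetry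
characteristic `Qₙ = φₙ(t,uₙ) − τₙ(t,uₙ) u̇ₙ`, required to hold identically in the
independent jet variables `t, uₙ₋₂, uₙ₋₁, uₙ, uₙ₊₁, uₙ₊₂`.
The arguments of `f n` are `(t, u_{n-1}, u_n, u_{n+1})`. -/
def VolterraDetEq (f : ℤ → ℝ → ℝ → ℝ → ℝ → ℝ) (τ φ : ℤ → ℝ → ℝ → ℝ) : Prop :=
  ∀ (n : ℤ) (t um2 um1 u0 up1 up2 : ℝ),
    (deriv (fun z => f n t z u0 up1) um1) *
        (φ (n - 1) t um1 - τ (n - 1) t um1 * f (n - 1) t um2 um1 u0) +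
      (deriv (fun z => f n t um1 z up1) u0) *
        (φ n t u0 - τ n t u0 * f n t um1 u0 up1) +
      (deriv (fun z => f n t um1 u0 z) up1) *
        (φ (n + 1) t up1 - τ (n + 1) t up1 * f (n + 1) t u0 up1 up2) +
      (deriv (fun s => τ n s u0) t + deriv (fun z => τ n t z) u0 * f n t um1 u0 up1) *
        f n t um1 u0 up1 +
      τ n t u0 *
        (deriv (fun s => f n s um1 u0 up1) t +
          ((deriv (fun z => f n t z u0 up1) um1) * f (n - 1) t um2 um1 u0 +
            (deriv (fun z => f n t um1 z up1) u0) * f n t um1 u0 up1 +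
            (deriv (fun z => f n t um1 u0 z) up1) * f (n + 1) t u0 up1 up2)) -
      deriv (fun s => φ n s u0) t -
      deriv (fun z => φ n t z) u0 * f n t um1 u0 up1 = 0

lemma deriv_zero_of_const' {g : ℝ → ℝ} (h : ∀ x y : ℝ, g x = g y) (c : ℝ) :
    deriv g c = 0 := by
  have : g = fun _ => g 0 := funext fun x => h x 0
  rw [this]; simp

/-- Theorem 3.1: for a Volterra-type equation `u̇ₙ = fₙ(t,uₙ₋₁,uₙ,uₙ₊₁)` satisfying one of
the nondegeneracy conditions, the coefficient `τₙ(t,uₙ)` of any Lie point symmetry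
depends on `t` alone and is independent of `n`. -/
theorem volterra_tau_depends_on_t_only
    (f : ℤ → ℝ → ℝ → ℝ → ℝ → ℝ) (τ φ : ℤ → ℝ → ℝ → ℝ)
    (hf : ∀ n, ContDiff ℝ 1 (fun p : ℝ × ℝ × ℝ × ℝ => f n p.1 p.2.1 p.2.2.1 p.2.2.2))
    (hτ : ∀ n, ContDiff ℝ 1 (fun p : ℝ × ℝ => τ n p.1 p.2))
    (hφ : ∀ n, ContDiff ℝ 1 (fun p : ℝ × ℝ => φ n p.1 p.2))
    (hdet : VolterraDetEq f τ φ)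
    (hnd : (∀ (n : ℤ) (t a b c : ℝ), deriv (fun z => f n t a b z) c ≠ 0) ∨
           (∀ (n : ℤ) (t a b c : ℝ), deriv (fun z => f n t z b c) a ≠ 0)) :
    ∃ τ0 : ℝ → ℝ, ∀ (n : ℤ) (t u : ℝ), τ n t u = τ0 t := by
  have key : ∀ (n : ℤ) (t a b : ℝ), τ n t a = τ (n + 1) t b := by
    rcases hnd with hup | hdn
    · intro n t u0 up1
      have hdiff : ∀ x y : ℝ,
          deriv (fun z => f n t (0:ℝ) u0 z) up1 * (τ n t u0 - τ (n + 1) t up1) *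
            (f (n + 1) t u0 up1 x - f (n + 1) t u0 up1 y) = 0 := by
        intro x y
        linear_combination (hdet n t 0 0 u0 up1 x) - (hdet n t 0 0 u0 up1 y)
      by_contra hne
      have h1 : deriv (fun z => f n t (0:ℝ) u0 z) up1 ≠ 0 := hup n t 0 u0 up1
      have h2 : τ n t u0 - τ (n + 1) t up1 ≠ 0 := sub_ne_zero.mpr hne
      have hconst : ∀ x y : ℝ, f (n + 1) t u0 up1 x = f (n + 1) t u0 up1 y := by
        intro x y
        have := hdiff x y
        rcases mul_eq_zero.mp this with h | h
        · exact absurd (mul_eq_zero.mp h) (by push_neg; exact ⟨h1, h2⟩)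
        · linarith [sub_eq_zero.mp h]
      exact hup (n + 1) t u0 up1 0 (deriv_zero_of_const' hconst 0)
    · intro n t u0 um1
      have hdiff : ∀ x y : ℝ,
          deriv (fun z => f (n + 1) t z um1 (0:ℝ)) u0 * (τ (n + 1) t um1 - τ n t u0) *
            (f n t x u0 um1 - f n t y u0 um1) = 0 := by
        intro x y
        have e1 := hdet (n + 1) t x u0 um1 0 0
        have e2 := hdet (n + 1) t y u0 um1 0 0
        simp only [add_sub_cancel_right] at e1 e2
        linear_combination e1 - e2
      by_contra hne
      have h1 : deriv (fun z => f (n + 1) t z um1 (0:ℝ)) u0 ≠ 0 := hdn (n + 1) t u0 um1 0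
      have h2 : τ (n + 1) t um1 - τ n t u0 ≠ 0 := sub_ne_zero.mpr (fun h => hne h.symm)
      have hconst : ∀ x y : ℝ, f n t x u0 um1 = f n t y u0 um1 := by
        intro x y
        have := hdiff x y
        rcases mul_eq_zero.mp this with h | h
        · exact absurd (mul_eq_zero.mp h) (by push_neg; exact ⟨h1, h2⟩)
        · linarith [sub_eq_zero.mp h]
      exact hdn n t 0 u0 um1 (deriv_zero_of_const' hconst 0)
  refine ⟨fun t => τ 0 t 0, ?_⟩
  have hc : ∀ (n : ℤ) (t : ℝ), τ n t 0 = τ 0 t 0 := by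
    intro n t
    induction n using Int.induction_on with
    | zero => rfl
    | succ k ih => rw [← key k t 0 0] at *; exact ih
    | pred k ih =>
        have := key (-(k:ℤ) - 1) t 0 0
        simp only [sub_add_cancel] at this
        rw [this]; exact ih
  intro n t u
  rw [key n t u 0, hc (n + 1) t]
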